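/- arXiv:2208.08213 — 4 statements merged into one kernel-verified Lean document; each statement's English description precedes it below -/
import Mathlib

section
/- Let G be a finite simple graph. Call a vertex v good if at least deg(v)/3 of its neighbors have degree at most deg(v), and call an edge of G good if at least one of its two endpoints is a good vertex. Then at least half of the edges of G are good; equivalently, the number of edges of G both of whose endpoints fail to be good is at most |E(G)|/2. -/
private lemma aux_pairs {V : Type*} [Fintype V] [DecidableEq V] (G : SimpleGraph V)
    [DecidableRel G.Adj] (key : V → ℕ) (hinj : Function.Injective key) (Q : V → Prop)
    [instp : DecidablePred (fun p : V × V =>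
        G.Adj p.1 p.2 ∧ key p.1 < key p.2 ∧ Q p.1 ∧ Q p.2)]
    [inste : DecidablePred (fun e : Sym2 V => ∀ v ∈ e, Q v)] :
    (Finset.univ.filter (fun p : V × V =>
        G.Adj p.1 p.2 ∧ key p.1 < key p.2 ∧ Q p.1 ∧ Q p.2)).card
      = (G.edgeFinset.filter (fun e => ∀ v ∈ e, Q v)).card := by
  refine Finset.card_bij (fun (p : V × V) _ => Sym2.mk p.1 p.2) ?_ ?_ ?_
  · rintro ⟨a, b⟩ hp
    simp only [Finset.mem_filter, Finset.mem_univ, true_and] at hp ⊢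
    obtain ⟨hadj, hlt, hqa, hqb⟩ := hp
    refine ⟨SimpleGraph.mem_edgeFinset.2 hadj, ?_⟩
    intro v hv
    rcases Sym2.mem_iff.1 hv with rfl | rfl <;> assumption
  · rintro ⟨a, b⟩ ha ⟨c, d⟩ hc h
    simp only [Finset.mem_filter, Finset.mem_univ, true_and] at ha hc
    rcases Sym2.eq_iff.1 h with ⟨rfl, rfl⟩ | ⟨rfl, rfl⟩
    · rfl
    · exact absurd (ha.2.1.trans hc.2.1) (lt_irrefl _)
  · intro e he
    simp only [Finset.mem_filter] at he
    obtain ⟨he1, he2⟩ := he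
    induction e using Sym2.ind with
    | _ a b =>
      have hadj : G.Adj a b := SimpleGraph.mem_edgeFinset.1 he1
      have hne : key a ≠ key b := fun h => G.ne_of_adj hadj (hinj h)
      rcases hne.lt_or_gt with h | h
      · exact ⟨(a, b), Finset.mem_filter.2 ⟨Finset.mem_univ _,
          hadj, h, he2 a (by simp), he2 b (by simp)⟩, rfl⟩
      · exact ⟨(b, a), Finset.mem_filter.2 ⟨Finset.mem_univ _,
          hadj.symm, h, he2 b (by simp), he2 a (by simp)⟩, Sym2.eq_swap⟩

open Classical in
/-- At least half of the edges of a finite simple graph are "good": an edge is good if at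
least one endpoint `v` is good, i.e. at least `deg(v)/3` of its neighbors have degree at
most `deg(v)`. Equivalently, the number of edges both of whose endpoints are not good is
at most half the number of edges. -/
theorem stmt0 {V : Type*} [Fintype V] [DecidableEq V] (G : SimpleGraph V)
    [DecidableRel G.Adj] :
    2 * (G.edgeFinset.filter (fun e =>
        ∀ v ∈ e, ¬ (G.degree v ≤ 3 * ((G.neighborFinset v).filter
          (fun u => G.degree u ≤ G.degree v)).card))).card
      ≤ G.edgeFinset.card := by
  classical
  set n := Fintype.card V with hn
  set f : V → ℕ := fun v => ((Fintype.equivFin V) v : ℕ) with hf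
  set key : V → ℕ := fun v => n * G.degree v + f v with hkey
  have hfn : ∀ v, f v < n := fun v => ((Fintype.equivFin V) v).2
  have hkey_lt : ∀ {u v : V}, G.degree u < G.degree v → key u < key v := by
    intro u v h
    have h2 : n * (G.degree u + 1) ≤ n * G.degree v := Nat.mul_le_mul_left _ h
    have h1 : n * (G.degree u + 1) = n * G.degree u + n := by ring
    have := hfn u
    simp only [hkey]
    omega
  have hkey_deg : ∀ {u v : V}, key u < key v → G.degree u ≤ G.degree v := by
    intro u v h
    by_contra hc
    exact absurd (hkey_lt (Nat.lt_of_not_le hc)) (Nat.lt_asymm h)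
  have hkinj : Function.Injective key := by
    intro u v h
    have hd : G.degree u = G.degree v := by
      by_contra hd
      rcases Nat.lt_or_ge (G.degree u) (G.degree v) with h' | h'
      · exact absurd h (Nat.ne_of_lt (hkey_lt h'))
      · exact absurd h.symm (Nat.ne_of_lt (hkey_lt (lt_of_le_of_ne h' (fun e => hd e.symm))))
    have hfe : f u = f v := by
      simp only [hkey, hd] at h
      omega
    exact (Fintype.equivFin V).injective (Fin.ext hfe)
  -- replace the count of bad edges by the count of oriented bad pairs
  rw [← aux_pairs G key hkinj (fun v => ¬ (G.degree v ≤ 3 * ((G.neighborFinset v).filter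
      (fun u => G.degree u ≤ G.degree v)).card))]
  -- replace the total number of edges by the count of oriented pairs
  have htot : (Finset.univ.filter (fun p : V × V =>
      G.Adj p.1 p.2 ∧ key p.1 < key p.2 ∧ True ∧ True)).card = G.edgeFinset.card := by
    rw [aux_pairs G key hkinj (fun _ => True)]
    congr 1
    exact Finset.filter_true_of_mem (fun e _ => fun v _ => trivial)
  rw [← htot]
  set good : V → Prop := fun v => G.degree v ≤ 3 * ((G.neighborFinset v).filter
      (fun u => G.degree u ≤ G.degree v)).card with hgood
  set Pr : Finset (V × V) := Finset.univ.filter (fun p : V × V =>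
      G.Adj p.1 p.2 ∧ key p.1 < key p.2 ∧ True ∧ True) with hPr
  set BPr : Finset (V × V) := Finset.univ.filter (fun p : V × V =>
      G.Adj p.1 p.2 ∧ key p.1 < key p.2 ∧
        (¬ (G.degree p.1 ≤ 3 * ((G.neighborFinset p.1).filter
          (fun u => G.degree u ≤ G.degree p.1)).card)) ∧
        (¬ (G.degree p.2 ≤ 3 * ((G.neighborFinset p.2).filter
          (fun u => G.degree u ≤ G.degree p.2)).card))) with hBPr
  have hPsum : Pr.card = ∑ v : V, (Pr.filter (fun p => p.1 = v)).card :=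
    Finset.card_eq_sum_card_fiberwise (fun p _ => Finset.mem_univ _)
  have hBsum : BPr.card = ∑ v : V, (BPr.filter (fun p => p.2 = v)).card :=
    Finset.card_eq_sum_card_fiberwise (fun p _ => Finset.mem_univ _)
  have hvert : ∀ v : V, 2 * (BPr.filter (fun p => p.2 = v)).card
      ≤ (Pr.filter (fun p => p.1 = v)).card := by
    intro v
    by_cases hg : G.degree v ≤ 3 * ((G.neighborFinset v).filter
        (fun u => G.degree u ≤ G.degree v)).card
    · have hempty : BPr.filter (fun p => p.2 = v) = ∅ := by
        apply Finset.eq_empty_of_forall_notMem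
        rintro ⟨a, b⟩ hp
        simp only [hBPr, Finset.mem_filter, Finset.mem_univ, true_and] at hp
        obtain ⟨⟨_, _, _, hb⟩, rfl⟩ := hp
        exact hb hg
      simp [hempty]
    · have hsd : 3 * ((G.neighborFinset v).filter
          (fun u => G.degree u ≤ G.degree v)).card < G.degree v := Nat.lt_of_not_le hg
      have h1 : (BPr.filter (fun p => p.2 = v)).card
          ≤ ((G.neighborFinset v).filter (fun u => G.degree u ≤ G.degree v)).card := by
        apply Finset.card_le_card_of_injOn (fun p => p.1)
        · rintro ⟨a, b⟩ (hp : (a, b) ∈ BPr.filter (fun p : V × V => p.2 = v))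
          simp only [hBPr, Finset.mem_filter, Finset.mem_univ, true_and] at hp
          obtain ⟨⟨hadj, hlt, _, _⟩, rfl⟩ := hp
          exact Finset.mem_filter.2 ⟨(SimpleGraph.mem_neighborFinset _ _ _).2 hadj.symm,
            hkey_deg hlt⟩
        · rintro ⟨a, b⟩ ha ⟨c, d⟩ hc (h : a = c)
          simp only [Finset.mem_coe, Finset.mem_filter] at ha hc
          have : b = d := ha.2.trans hc.2.symm
          simp [h, this]
      have h2 : G.degree v - ((G.neighborFinset v).filter
          (fun u => G.degree u ≤ G.degree v)).card
          ≤ (Pr.filter (fun p => p.1 = v)).card := by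
        have hTcard : ((G.neighborFinset v).filter
            (fun u => ¬ G.degree u ≤ G.degree v)).card
            = G.degree v - ((G.neighborFinset v).filter
              (fun u => G.degree u ≤ G.degree v)).card := by
          have hsum := Finset.card_filter_add_card_filter_not
            (s := G.neighborFinset v) (p := fun u => G.degree u ≤ G.degree v)
          have hdeg : (G.neighborFinset v).card = G.degree v :=
            G.card_neighborFinset_eq_degree v
          omega
        rw [← hTcard]
        apply Finset.card_le_card_of_injOn (fun w => (v, w))
        · intro w hw
          simp only [Finset.mem_coe, Finset.mem_filter, SimpleGraph.mem_neighborFinset] at hw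
          obtain ⟨hadj, hd⟩ := hw
          refine Finset.mem_filter.2 ⟨?_, rfl⟩
          exact Finset.mem_filter.2 ⟨Finset.mem_univ _,
            hadj, hkey_lt (Nat.lt_of_not_le hd), trivial, trivial⟩
        · intro a _ b _ h
          exact (Prod.ext_iff.1 h).2
      omega
  calc 2 * BPr.card = ∑ v : V, 2 * (BPr.filter (fun p => p.2 = v)).card := by
        rw [hBsum, Finset.mul_sum]
    _ ≤ ∑ v : V, (Pr.filter (fun p => p.1 = v)).card :=
        Finset.sum_le_sum (fun v _ => hvert v)
    _ = Pr.card := hPsum.symm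
end

section
/- Let G be a finite simple graph. For every vertex v let N2+(v) = {u ∈ V : dist(u,v) ≤ 2} be the closed 2-hop neighborhood of v, and call v good if the sum over u ∈ N2+(v) of 1/(deg(u)+1) is at least 1/2. Then at least half of the vertices of G are good, i.e., the number of vertices that are not good is at most |V(G)|/2. -/
open Finset

section Aux
open Classical
variable {V : Type*} [Fintype V] (G : SimpleGraph V) [DecidableRel G.Adj]

/-- weight of a vertex -/
noncomputable def xw (u : V) : ℝ := 1 / (G.degree u + 1)

lemma xw_pos (u : V) : 0 < xw G u := by
  unfold xw; positivity

/-- closed neighborhood as a finset -/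
noncomputable def Ncl (u : V) : Finset V := insert u (G.neighborFinset u)

lemma mem_Ncl {u w : V} : w ∈ Ncl G u ↔ w = u ∨ G.Adj u w := by
  simp [Ncl]

lemma Ncl_symm {u w : V} : w ∈ Ncl G u ↔ u ∈ Ncl G w := by
  rw [mem_Ncl, mem_Ncl, eq_comm, G.adj_comm]

lemma Ncl_card (u : V) : (Ncl G u).card = G.degree u + 1 := by
  rw [Ncl, card_insert_of_notMem (by simp), G.card_neighborFinset_eq_degree]

/-- one-hop weight sum -/
noncomputable def f1 (w : V) : ℝ := ∑ u ∈ Ncl G w, xw G u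

lemma card_mul_xw (u : V) : ((Ncl G u).card : ℝ) * xw G u = 1 := by
  rw [Ncl_card, xw]
  have h : (G.degree u : ℝ) + 1 ≠ 0 := by positivity
  push_cast
  field_simp

lemma sum_f1_eq (A : Finset V) :
    ∑ w ∈ A, f1 G w = ∑ u : V, ((Ncl G u ∩ A).card : ℝ) * xw G u := by
  unfold f1
  have h1 : ∀ w ∈ A, ∑ u ∈ Ncl G w, xw G u
      = ∑ u : V, if u ∈ Ncl G w then xw G u else 0 := by
    intro w _
    rw [Finset.sum_ite_mem, univ_inter]
  rw [Finset.sum_congr rfl h1, Finset.sum_comm]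
  refine Finset.sum_congr rfl fun u _ => ?_
  have h2 : ∀ w ∈ A, (if u ∈ Ncl G w then xw G u else 0)
      = if w ∈ Ncl G u then xw G u else 0 := by
    intro w _; exact if_congr (Ncl_symm G) rfl rfl
  rw [Finset.sum_congr rfl h2, Finset.sum_ite_mem, Finset.inter_comm,
    Finset.sum_const, nsmul_eq_mul]

lemma sum_f1_total : ∑ w : V, f1 G w = (Fintype.card V : ℝ) := by
  rw [sum_f1_eq G Finset.univ]
  have : ∀ u ∈ (univ : Finset V),
      ((Ncl G u ∩ univ).card : ℝ) * xw G u = 1 := by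
    intro u _
    rw [Finset.inter_univ, card_mul_xw]
  rw [Finset.sum_congr rfl this, Finset.sum_const, nsmul_eq_mul, mul_one,
    Finset.card_univ]

lemma walk_of_mem_Ncl {u w : V} (h : w ∈ Ncl G u) :
    ∃ p : G.Walk w u, p.length ≤ 1 := by
  rcases (mem_Ncl G).1 h with rfl | h
  · exact ⟨.nil, by simp⟩
  · exact ⟨.cons h.symm .nil, by simp⟩

end Aux

open Classical in
/-- Call a vertex `v` good if `∑_{u : dist(u,v) ≤ 2} 1/(deg(u)+1) ≥ 1/2`, where the sum is
over the closed 2-hop neighborhood of `v` (vertices joined to `v` by a walk of length at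
most 2). Then at most half of the vertices fail to be good. -/
theorem stmt1 {V : Type*} [Fintype V] (G : SimpleGraph V) [DecidableRel G.Adj] :
    2 * (Finset.univ.filter (fun v : V =>
        ¬ ((1 : ℝ) / 2 ≤
          ∑ u ∈ Finset.univ.filter (fun u : V => ∃ p : G.Walk u v, p.length ≤ 2),
            (1 : ℝ) / (G.degree u + 1)))).card
      ≤ Fintype.card V := by
  classical
  set n := Fintype.card V with hn
  -- the two-hop neighborhood finset and sum
  set N2 : V → Finset V :=
    fun v => Finset.univ.filter (fun u : V => ∃ p : G.Walk u v, p.length ≤ 2) with hN2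
  set f2 : V → ℝ := fun v => ∑ u ∈ N2 v, (1 : ℝ) / (G.degree u + 1) with hf2
  set B : Finset V := Finset.univ.filter (fun v : V => ¬ ((1 : ℝ) / 2 ≤ f2 v)) with hB
  set A : Finset V := Finset.univ.filter (fun w : V => (1:ℝ)/2 ≤ f1 G w) with hA
  set S : Finset V := Finset.univ.filter (fun w : V => ¬ ((1:ℝ)/2 ≤ f1 G w)) with hS
  set T : Finset V := Finset.univ.filter (fun u : V => (Ncl G u ∩ A).Nonempty) with hT
  -- statement sum equals f2
  have hf2x : ∀ v, f2 v = ∑ u ∈ N2 v, xw G u := by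
    intro v; rfl
  -- for u ∈ Ncl v, Ncl u ⊆ N2 v
  have hsub : ∀ {v u : V}, u ∈ Ncl G v → Ncl G u ⊆ N2 v := by
    intro v u hu w hw
    obtain ⟨p1, hp1⟩ := walk_of_mem_Ncl G hw
    obtain ⟨p2, hp2⟩ := walk_of_mem_Ncl G hu
    refine Finset.mem_filter.2 ⟨Finset.mem_univ _, ⟨p1.append p2, ?_⟩⟩
    rw [SimpleGraph.Walk.length_append]; omega
  -- for u ∈ Ncl v, f1 u ≤ f2 v
  have hf1f2 : ∀ {v u : V}, u ∈ Ncl G v → f1 G u ≤ f2 v := by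
    intro v u hu
    rw [hf2x]
    exact Finset.sum_le_sum_of_subset_of_nonneg (hsub hu)
      (fun w _ _ => (xw_pos G w).le)
  -- bad vertices avoid T
  have hBT : B ⊆ Finset.univ \ T := by
    intro v hv
    refine Finset.mem_sdiff.2 ⟨Finset.mem_univ _, ?_⟩
    intro hvT
    obtain ⟨u, hu⟩ := (Finset.mem_filter.1 hvT).2
    rw [Finset.mem_inter] at hu
    have h1 : (1:ℝ)/2 ≤ f1 G u := (Finset.mem_filter.1 hu.2).2
    have h2 : ¬ ((1:ℝ)/2 ≤ f2 v) := (Finset.mem_filter.1 hv).2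
    exact h2 (h1.trans (hf1f2 hu.1))
  -- (i) sum over A of f1 ≤ |T|
  have hi : ∑ w ∈ A, f1 G w ≤ (T.card : ℝ) := by
    rw [sum_f1_eq]
    have : ∀ u ∈ (univ : Finset V),
        ((Ncl G u ∩ A).card : ℝ) * xw G u ≤ if u ∈ T then (1:ℝ) else 0 := by
      intro u _
      by_cases hu : u ∈ T
      · rw [if_pos hu]
        calc ((Ncl G u ∩ A).card : ℝ) * xw G u
            ≤ ((Ncl G u).card : ℝ) * xw G u := by
              apply mul_le_mul_of_nonneg_right _ (xw_pos G u).le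
              exact_mod_cast Finset.card_le_card (Finset.inter_subset_left)
          _ = 1 := card_mul_xw G u
      · rw [if_neg hu]
        have : (Ncl G u ∩ A) = ∅ := by
          rw [hT, Finset.mem_filter] at hu
          push_neg at hu
          exact hu (Finset.mem_univ _)
        rw [this]
        simp
    calc ∑ u : V, ((Ncl G u ∩ A).card : ℝ) * xw G u
        ≤ ∑ u : V, (if u ∈ T then (1:ℝ) else 0) := Finset.sum_le_sum this
      _ = (T.card : ℝ) := by
          rw [Finset.sum_ite_mem, univ_inter, Finset.sum_const, nsmul_eq_mul,
            mul_one]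
  -- (ii) sum over S of f1 ≤ |S|/2
  have hii : ∑ w ∈ S, f1 G w ≤ (S.card : ℝ) * (1/2) := by
    have : ∀ w ∈ S, f1 G w ≤ (1:ℝ)/2 := by
      intro w hw
      have := (Finset.mem_filter.1 hw).2
      linarith [lt_of_not_ge this]
    calc ∑ w ∈ S, f1 G w ≤ ∑ w ∈ S, (1:ℝ)/2 := Finset.sum_le_sum this
      _ = (S.card : ℝ) * (1/2) := by rw [Finset.sum_const, nsmul_eq_mul]
  -- totals
  have htot : ∑ w ∈ A, f1 G w + ∑ w ∈ S, f1 G w = (n : ℝ) := by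
    rw [hA, hS, Finset.sum_filter_add_sum_filter_not, sum_f1_total]
  have hScard : (S.card : ℝ) ≤ (n : ℝ) := by
    exact_mod_cast Finset.card_le_card (Finset.subset_univ S)
  have hTcard : T.card ≤ n := by
    exact_mod_cast Finset.card_le_card (Finset.subset_univ T)
  have hBcard : (B.card : ℝ) ≤ (n : ℝ) - (T.card : ℝ) := by
    have h1 : B.card ≤ n - T.card := by
      calc B.card ≤ (Finset.univ \ T).card := Finset.card_le_card hBT
        _ = n - T.card := by rw [Finset.card_sdiff_of_subset (Finset.subset_univ T), Finset.card_univ]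
    have := Nat.cast_le (α := ℝ) |>.2 h1
    rwa [Nat.cast_sub hTcard] at this
  -- finish
  have final : (2 : ℝ) * B.card ≤ (n : ℝ) := by
    have h2 : (B.card : ℝ) ≤ ∑ w ∈ S, f1 G w := by
      have := hi
      linarith
    linarith
  exact_mod_cast final
end

section
/- Let C ≥ 2 and q ≥ 1 be integers and let s be an integer with s ≥ 8·ln C. Then binom(C·q, s·q) · exp(−s²·q/4) < exp(−s²·q/8), where binom(n,k) denotes the binomial coefficient (which equals 0 when k > n). -/
/-- For integers `C ≥ 2`, `q ≥ 1` and an integer `s ≥ 8 ln C`, we have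
`binom(C·q, s·q) · exp(−s²·q/4) < exp(−s²·q/8)`. -/
theorem stmt6 (C q s : ℕ) (hC : 2 ≤ C) (hq : 1 ≤ q)
    (hs : 8 * Real.log C ≤ (s : ℝ)) :
    ((C * q).choose (s * q) : ℝ) * Real.exp (-((s : ℝ) ^ 2 * q) / 4) <
      Real.exp (-((s : ℝ) ^ 2 * q) / 8) := by
  have hlog2 : (0.6931471803 : ℝ) < Real.log 2 := Real.log_two_gt_d9
  have hlogC2 : Real.log 2 ≤ Real.log C := by
    apply Real.log_le_log (by norm_num)
    exact_mod_cast hC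
  have hs6R : (6 : ℝ) ≤ (s : ℕ) := by
    have : (5 : ℝ) < s := by nlinarith
    have h5 : (5 : ℕ) < s := by exact_mod_cast this
    exact_mod_cast h5
  have hs6 : 6 ≤ s := by exact_mod_cast hs6R
  have key : ((C * q).choose (s * q) : ℝ) < Real.exp ((s : ℝ) ^ 2 * q / 8) := by
    by_cases hCs : C < s
    · have : C * q < s * q := (Nat.mul_lt_mul_right (by omega : 0 < q)).2 hCs
      rw [Nat.choose_eq_zero_of_lt this]
      simpa using Real.exp_pos _
    · push_neg at hCs
      have hsR : (0 : ℝ) < s := by positivity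
      have hqR : (0 : ℝ) < q := by exact_mod_cast hq
      have hCR : (0 : ℝ) < C := by positivity
      set k := s * q with hk
      have hkR : (k : ℝ) = (s : ℝ) * q := by push_cast [hk]; ring
      have h1 : ((C * q).choose k : ℝ) ≤ ((C * q : ℕ) : ℝ) ^ k / (Nat.factorial k : ℝ) :=
        Nat.choose_le_pow_div k (C * q)
      have h2 : (k : ℝ) ^ k / (Nat.factorial k : ℝ) ≤ Real.exp k :=
        Real.pow_div_factorial_le_exp (x := (k : ℝ)) (by positivity) k
      have hfac : (0 : ℝ) < (Nat.factorial k : ℝ) := by exact_mod_cast Nat.factorial_pos k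
      have heq : ((C * q : ℕ) : ℝ) ^ k = ((C : ℝ) / s) ^ k * (k : ℝ) ^ k := by
        rw [← mul_pow, hkR]
        congr 1
        push_cast
        field_simp
      have h3 : ((C * q).choose k : ℝ) ≤ ((C : ℝ) / s) ^ k * Real.exp k := by
        calc ((C * q).choose k : ℝ) ≤ ((C * q : ℕ) : ℝ) ^ k / (Nat.factorial k : ℝ) := h1
          _ = ((C : ℝ) / s) ^ k * ((k : ℝ) ^ k / (Nat.factorial k : ℝ)) := by
              rw [heq]; ring
          _ ≤ ((C : ℝ) / s) ^ k * Real.exp k := by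
              apply mul_le_mul_of_nonneg_left h2 (by positivity)
      have hCs_pos : (0 : ℝ) < (C : ℝ) / s := by positivity
      have h4 : ((C : ℝ) / s) ^ k * Real.exp k
          = Real.exp ((k : ℝ) * (Real.log C - Real.log s) + k) := by
        rw [Real.exp_add, ← Real.log_div (ne_of_gt hCR) (ne_of_gt hsR),
          Real.exp_nat_mul, Real.exp_log hCs_pos]
      have hlog6 : (1 : ℝ) < Real.log 6 := by
        rw [lt_iff_lt_of_le_iff_le (Real.log_le_iff_le_exp (by norm_num))]
        calc Real.exp 1 < 2.7182818286 := Real.exp_one_lt_d9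
          _ ≤ 6 := by norm_num
      have hlogs : Real.log 6 ≤ Real.log s := Real.log_le_log (by norm_num) hs6R
      have h5 : (k : ℝ) * (Real.log C - Real.log s) + k < (s : ℝ) ^ 2 * q / 8 := by
        rw [hkR]
        have hsq : (0 : ℝ) < (s : ℝ) * q := by positivity
        nlinarith [hsq, hs, hlog6, hlogs]
      calc ((C * q).choose k : ℝ) ≤ ((C : ℝ) / s) ^ k * Real.exp k := h3
        _ = Real.exp ((k : ℝ) * (Real.log C - Real.log s) + k) := h4
        _ < Real.exp ((s : ℝ) ^ 2 * q / 8) := Real.exp_lt_exp.2 h5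
  calc ((C * q).choose (s * q) : ℝ) * Real.exp (-((s : ℝ) ^ 2 * q) / 4)
      < Real.exp ((s : ℝ) ^ 2 * q / 8) * Real.exp (-((s : ℝ) ^ 2 * q) / 4) :=
        mul_lt_mul_of_pos_right key (Real.exp_pos _)
    _ = Real.exp (-((s : ℝ) ^ 2 * q) / 8) := by
        rw [← Real.exp_add]; congr 1; ring
end

section
/- Let G be a finite simple graph and suppose each edge e = {u,v} of G is marked independently with probability exactly 1/(4·(deg(u)+deg(v))); that is, the events {e is marked}, for e ranging over the edges of G, are mutually independent with these probabilities. Let v be a vertex with deg(v) ≥ 1 such that at least deg(v)/3 of the neighbors of v have degree at most deg(v). Then with probability at least 1/100 there exists an edge e incident to v such that e is marked and no other edge sharing an endpoint with e is marked. -/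
private lemma one_sub_sum_le_prod' {ι : Type*} (s : Finset ι) (f : ι → ENNReal) :
    1 - ∑ i ∈ s, f i ≤ ∏ i ∈ s, (1 - f i) := by
  induction s using Finset.cons_induction with
  | empty => simp
  | cons a s ha ih =>
    rw [Finset.sum_cons, Finset.prod_cons]
    have hne : (1 : ENNReal) - f a ≠ ⊤ :=
      ne_top_of_le_ne_top ENNReal.one_ne_top tsub_le_self
    calc 1 - (f a + ∑ i ∈ s, f i) = (1 - f a) - ∑ i ∈ s, f i := by
          rw [tsub_add_eq_tsub_tsub]
      _ ≤ (1 - f a) - (1 - f a) * ∑ i ∈ s, f i := by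
          refine tsub_le_tsub_left ?_ _
          calc (1 - f a) * ∑ i ∈ s, f i ≤ 1 * ∑ i ∈ s, f i :=
                mul_le_mul_left tsub_le_self _
            _ = ∑ i ∈ s, f i := one_mul _
      _ = (1 - f a) * (1 - ∑ i ∈ s, f i) := by
          rw [ENNReal.mul_sub (fun _ _ => hne), mul_one]
      _ ≤ (1 - f a) * ∏ i ∈ s, (1 - f i) := mul_le_mul_right ih _

open Classical in
/-- Mark each edge `e = {u,v}` of a finite simple graph `G` independently with probability
exactly `1/(4(deg u + deg v))` (the marking events, indexed by the edges, are mutually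
independent). If `v` is a vertex of degree at least 1 such that at least `deg(v)/3` of its
neighbors have degree at most `deg(v)`, then with probability at least `1/100` some edge
incident to `v` is marked while no other edge sharing an endpoint with it is marked. -/
theorem stmt13 {V : Type*} [Fintype V] [DecidableEq V] (G : SimpleGraph V)
    [DecidableRel G.Adj] {Ω : Type*} [MeasurableSpace Ω]
    (P : MeasureTheory.Measure Ω) [MeasureTheory.IsProbabilityMeasure P]
    (M : Sym2 V → Set Ω) (hmeas : ∀ e, MeasurableSet (M e))
    (hindep : ProbabilityTheory.iIndepSet (fun e : G.edgeSet => M e) P)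
    (hprob : ∀ u v : V, G.Adj u v →
      P (M s(u, v)) = 1 / (4 * ((G.degree u : ENNReal) + (G.degree v : ENNReal))))
    (v : V) (hdegv : 1 ≤ G.degree v)
    (hgood : G.degree v ≤ 3 * ((G.neighborFinset v).filter
        (fun u => G.degree u ≤ G.degree v)).card) :
    (1 : ENNReal) / 100 ≤
      P {ω : Ω | ∃ u : V, G.Adj v u ∧ ω ∈ M s(v, u) ∧
          ∀ e' ∈ G.edgeSet, e' ≠ s(v, u) →
            (∃ x : V, x ∈ e' ∧ x ∈ s(v, u)) → ω ∉ M e'} := by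
  classical
  set S : Finset V := (G.neighborFinset v).filter (fun u => G.degree u ≤ G.degree v) with hSdef
  -- incidence sets as finsets of the subtype of edges
  set I : V → Finset G.edgeSet := fun x => Finset.univ.filter (fun e => x ∈ e.1) with hIdef
  have hI : ∀ x : V, ∀ e : G.edgeSet, e ∈ I x ↔ x ∈ e.1 := by
    intro x e; simp [hIdef]
  have hIcard : ∀ x : V, (I x).card = G.degree x := by
    intro x
    rw [← SimpleGraph.card_incidenceFinset_eq_degree]
    refine Finset.card_bij (fun (e : G.edgeSet) (_ : e ∈ I x) => (e : Sym2 V)) ?_ ?_ ?_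
    · intro e he
      rw [SimpleGraph.mem_incidenceFinset]
      exact ⟨e.2, (hI x e).1 he⟩
    · intro e₁ _ e₂ _ h; exact Subtype.ext h
    · intro e he
      rw [SimpleGraph.mem_incidenceFinset] at he
      exact ⟨⟨e, he.1⟩, (hI x _).2 he.2, rfl⟩
  -- per-edge probability upper bound
  have hp_le : ∀ x : V, ∀ e : G.edgeSet, x ∈ e.1 →
      P (M e.1) ≤ 1 / (4 * (G.degree x : ENNReal)) := by
    intro x e hx
    obtain ⟨y, hy⟩ := Sym2.mem_iff_exists.mp hx
    have hadj : G.Adj x y := G.mem_edgeSet.mp (hy ▸ e.2)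
    rw [hy, hprob x y hadj, one_div, one_div]
    refine ENNReal.inv_le_inv.mpr ?_
    gcongr
    exact le_self_add
  -- sum over all edges incident to x is at most 1/4
  have hsumI : ∀ x : V, 1 ≤ G.degree x → ∑ e ∈ I x, P (M e.1) ≤ 1 / 4 := by
    intro x hx
    have hcast : ((G.degree x : ℕ) : ENNReal) ≠ 0 := by
      exact_mod_cast Nat.one_le_iff_ne_zero.mp hx
    calc ∑ e ∈ I x, P (M e.1) ≤ (I x).card • (1 / (4 * (G.degree x : ENNReal))) :=
          Finset.sum_le_card_nsmul _ _ _ (fun e he => hp_le x e ((hI x e).1 he))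
      _ = (G.degree x : ENNReal) * (1 / (4 * (G.degree x : ENNReal))) := by
          rw [hIcard, nsmul_eq_mul]
      _ = 1 / 4 := by
          rw [one_div, ENNReal.mul_inv (Or.inl (by norm_num)) (Or.inl (by norm_num)),
            mul_left_comm, ENNReal.mul_inv_cancel hcast (ENNReal.natCast_ne_top _),
            mul_one, one_div]
  have hd0 : ((G.degree v : ℕ) : ENNReal) ≠ 0 := by
    exact_mod_cast Nat.one_le_iff_ne_zero.mp hdegv
  -- the events
  set N : V → Finset G.edgeSet := fun u => (I v ∪ I u).filter (fun e => e.1 ≠ s(v, u))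
    with hNdef
  set A : V → Set Ω := fun u => M s(v, u) ∩ ⋂ e ∈ N u, (M e.1)ᶜ with hAdef
  have hAmeas : ∀ u, MeasurableSet (A u) := by
    intro u
    exact (hmeas _).inter (Set.Finite.measurableSet_biInter (N u).finite_toSet
      (fun e _ => (hmeas _).compl))
  -- basic facts about S
  have hSadj : ∀ u ∈ S, G.Adj v u := by
    intro u hu
    rw [hSdef, Finset.mem_filter, SimpleGraph.mem_neighborFinset] at hu
    exact hu.1
  have hSdeg : ∀ u ∈ S, G.degree u ≤ G.degree v := by
    intro u hu
    rw [hSdef, Finset.mem_filter] at hu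
    exact hu.2
  -- lower bound on P (A u)
  have hPA : ∀ u ∈ S, 1 / (16 * (G.degree v : ENNReal)) ≤ P (A u) := by
    intro u huS
    have hu : G.Adj v u := hSadj u huS
    have hdu1 : 1 ≤ G.degree u := by
      rw [← SimpleGraph.card_neighborFinset_eq_degree]
      exact Finset.card_pos.mpr ⟨v, by rw [SimpleGraph.mem_neighborFinset]; exact hu.symm⟩
    have hmemE : s(v, u) ∈ G.edgeSet := G.mem_edgeSet.mpr hu
    set eu : G.edgeSet := ⟨s(v, u), hmemE⟩ with heudef
    have heuN : eu ∉ N u := by simp [hNdef, heudef]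
    set g : G.edgeSet → Set Ω := fun e => if e = eu then M e.1 else (M e.1)ᶜ with hgdef
    have hAeq : A u = ⋂ e ∈ insert eu (N u), g e := by
      rw [hAdef]
      simp only [Finset.set_biInter_insert]
      congr 1
      · simp [hgdef, heudef]
      · refine Set.iInter₂_congr (fun e he => ?_)
        have : e ≠ eu := fun h => heuN (h ▸ he)
        simp [hgdef, this]
    have hind := (ProbabilityTheory.iIndepSet_iff_iIndep _ _).1 hindep
    have hprod : P (A u) = ∏ e ∈ insert eu (N u), P (g e) := by
      rw [hAeq]
      refine hind.meas_biInter (fun e _ => ?_)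
      by_cases h : e = eu
      · simp only [hgdef, if_pos h]
        exact MeasurableSpace.measurableSet_generateFrom rfl
      · simp only [hgdef, if_neg h]
        exact (MeasurableSpace.measurableSet_generateFrom
          (show M e.1 ∈ {M e.1} from rfl)).compl
    rw [hprod, Finset.prod_insert heuN]
    have hg1 : P (g eu) = P (M s(v, u)) := by simp [hgdef, heudef]
    have hg2 : ∀ e ∈ N u, P (g e) = 1 - P (M e.1) := by
      intro e he
      have : e ≠ eu := fun h => heuN (h ▸ he)
      simp only [hgdef, if_neg this]
      exact MeasureTheory.prob_compl_eq_one_sub (hmeas _)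
    rw [hg1, Finset.prod_congr rfl hg2]
    -- bound the sum of probabilities over N u
    have hsumN : ∑ e ∈ N u, P (M e.1) ≤ 1 / 2 := by
      calc ∑ e ∈ N u, P (M e.1) ≤ ∑ e ∈ I v ∪ I u, P (M e.1) :=
            Finset.sum_le_sum_of_subset (Finset.filter_subset _ _)
        _ ≤ ∑ e ∈ I v, P (M e.1) + ∑ e ∈ I u, P (M e.1) := by
            rw [← Finset.sum_union_inter]
            exact le_add_right le_rfl
        _ ≤ 1 / 4 + 1 / 4 := add_le_add (hsumI v hdegv) (hsumI u hdu1)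
        _ = 1 / 2 := by
            rw [ENNReal.div_add_div_same, div_eq_mul_inv, div_eq_mul_inv,
              show (4:ENNReal) = 2*2 by norm_num,
              ENNReal.mul_inv (Or.inl (by norm_num)) (Or.inl (by norm_num)),
              show (1+1 : ENNReal) = 2 by norm_num, ← mul_assoc,
              ENNReal.mul_inv_cancel (by norm_num) (by norm_num), one_mul]
    have hprodN : (1 : ENNReal) / 2 ≤ ∏ e ∈ N u, (1 - P (M e.1)) := by
      refine le_trans ?_ (one_sub_sum_le_prod' _ _)
      calc (1 : ENNReal) / 2 = 1 - 1 / 2 := by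
            rw [one_div]; exact ENNReal.one_sub_inv_two.symm
        _ ≤ 1 - ∑ e ∈ N u, P (M e.1) := tsub_le_tsub_left hsumN _
    have hpu : 1 / (8 * (G.degree v : ENNReal)) ≤ P (M s(v, u)) := by
      rw [hprob v u hu, one_div, one_div]
      refine ENNReal.inv_le_inv.mpr ?_
      have : ((G.degree u : ℕ) : ENNReal) ≤ (G.degree v : ENNReal) := by
        exact_mod_cast hSdeg u huS
      calc 4 * ((G.degree v : ENNReal) + (G.degree u : ENNReal))
          ≤ 4 * ((G.degree v : ENNReal) + (G.degree v : ENNReal)) := by gcongr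
        _ = 8 * (G.degree v : ENNReal) := by ring
    calc 1 / (16 * (G.degree v : ENNReal))
        = 1 / (8 * (G.degree v : ENNReal)) * (1 / 2) := by
          rw [one_div, one_div, one_div,
            ← ENNReal.mul_inv (Or.inr (by norm_num)) (Or.inr (by norm_num))]
          congr 1
          ring
      _ ≤ P (M s(v, u)) * ∏ e ∈ N u, (1 - P (M e.1)) := mul_le_mul' hpu hprodN
  -- the events are pairwise disjoint
  have hdisj : (S : Set V).PairwiseDisjoint A := by
    intro u hu u' hu' hne
    refine Set.disjoint_left.mpr (fun ω hω hω' => ?_)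
    have hu'adj : G.Adj v u' := hSadj u' (by exact_mod_cast hu')
    have hmem' : s(v, u') ∈ G.edgeSet := G.mem_edgeSet.mpr hu'adj
    have hne' : s(v, u') ≠ s(v, u) := by
      intro h
      exact hne (Sym2.congr_right.mp h).symm
    have hNmem : (⟨s(v, u'), hmem'⟩ : G.edgeSet) ∈ N u := by
      rw [hNdef]
      refine Finset.mem_filter.mpr ⟨Finset.mem_union_left _ ((hI v _).2 ?_), hne'⟩
      exact Sym2.mem_mk_left v u'
    have : ω ∈ (M s(v, u'))ᶜ := by
      have := hω.2
      rw [Set.mem_iInter₂] at this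
      exact this _ hNmem
    exact this hω'.1
  -- the union of the events is inside the target event
  have hsub : (⋃ u ∈ S, A u) ⊆ {ω : Ω | ∃ u : V, G.Adj v u ∧ ω ∈ M s(v, u) ∧
      ∀ e' ∈ G.edgeSet, e' ≠ s(v, u) →
        (∃ x : V, x ∈ e' ∧ x ∈ s(v, u)) → ω ∉ M e'} := by
    intro ω hω
    rw [Set.mem_iUnion₂] at hω
    obtain ⟨u, huS, hωu⟩ := hω
    refine ⟨u, hSadj u huS, hωu.1, fun e' he' hne' hx hωe' => ?_⟩
    obtain ⟨x, hx1, hx2⟩ := hx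
    have hNmem : (⟨e', he'⟩ : G.edgeSet) ∈ N u := by
      rw [hNdef]
      refine Finset.mem_filter.mpr ⟨?_, hne'⟩
      rcases Sym2.mem_iff.mp hx2 with h | h
      · exact Finset.mem_union_left _ ((hI v _).2 (h ▸ hx1))
      · exact Finset.mem_union_right _ ((hI u _).2 (h ▸ hx1))
    have := hωu.2
    rw [Set.mem_iInter₂] at this
    exact this _ hNmem hωe'
  -- assemble
  have hScard0 : (S.card : ENNReal) ≠ 0 := by
    have : 1 ≤ S.card := by omega
    exact_mod_cast Nat.one_le_iff_ne_zero.mp this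
  calc (1 : ENNReal) / 100 ≤ 1 / 48 := by
        rw [one_div, one_div]
        exact ENNReal.inv_le_inv.mpr (by norm_num)
    _ ≤ (S.card : ENNReal) * (1 / (16 * (G.degree v : ENNReal))) := by
        have h16 : (16 : ENNReal) * (G.degree v : ENNReal) ≤ 48 * (S.card : ENNReal) := by
          have : (G.degree v : ℕ) ≤ 3 * S.card := hgood
          calc (16 : ENNReal) * (G.degree v : ENNReal)
              ≤ 16 * ((3 : ENNReal) * (S.card : ENNReal)) := by
                gcongr
                exact_mod_cast this
            _ = 48 * (S.card : ENNReal) := by ring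
        calc (1 : ENNReal) / 48
            = (S.card : ENNReal) * (1 / (48 * (S.card : ENNReal))) := by
              rw [one_div, one_div, ENNReal.mul_inv (Or.inl (by norm_num))
                (Or.inl (by norm_num)), mul_left_comm,
                ENNReal.mul_inv_cancel hScard0 (ENNReal.natCast_ne_top _), mul_one]
          _ ≤ (S.card : ENNReal) * (1 / (16 * (G.degree v : ENNReal))) := by
              refine mul_le_mul_right ?_ _
              rw [one_div, one_div]
              exact ENNReal.inv_le_inv.mpr h16
    _ ≤ ∑ u ∈ S, P (A u) := by
        have := Finset.card_nsmul_le_sum S (fun u => P (A u))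
          (1 / (16 * (G.degree v : ENNReal))) hPA
        rwa [nsmul_eq_mul] at this
    _ = P (⋃ u ∈ S, A u) := (MeasureTheory.measure_biUnion_finset hdisj
        (fun u _ => hAmeas u)).symm
    _ ≤ _ := MeasureTheory.measure_mono hsub
end
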